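/- arXiv:1907.08476 — 7 statements merged into one kernel-verified Lean document; each statement's English description precedes it below -/
import Mathlib

section
/- Let n ≥ 4 be an integer and let h be a continuous function on [0,∞) with h(r) ≥ 0 for all r ≥ 0. Define h₁(r) = −(n−1+√(n−1))/((n−2)r). Then there exists no global C² solution u on [0,∞) of the ODE u''(r) + ((n-1)/r)u'(r) − (n-2)u(r)³ − (2(n-1)/r)u(r)² − ((n-1)/r²)u(r) + (n-4)u(r)u'(r) = [u'(r) + u(r)/r]·h(r) with u(0) = 0, u'(0) = α ≠ 0, for which there exists R > 0 with u(R) = h₁(R) and u'(R) ≤ 0. -/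
open Set Filter Topology

/-- Sign propagation: if `z a ≤ 0` and `z' ≤ M z` whenever `z > 0`, then `z ≤ 0` on `[a,b]`. -/
lemma sign_prop {z z' : ℝ → ℝ} {a b M : ℝ}
    (hd : ∀ r ∈ Icc a b, HasDerivAt z (z' r) r)
    (hineq : ∀ r ∈ Icc a b, 0 < z r → z' r ≤ M * z r)
    (ha : z a ≤ 0) : ∀ r ∈ Icc a b, z r ≤ 0 := by
  intro t ht
  by_contra hpos
  push_neg at hpos
  have hab : a ≤ b := le_trans ht.1 ht.2
  -- the set of points in [a,t] where z ≤ 0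
  set S : Set ℝ := {s | s ∈ Icc a t ∧ z s ≤ 0} with hS
  have haS : a ∈ S := ⟨⟨le_refl a, ht.1⟩, ha⟩
  have hSne : S.Nonempty := ⟨a, haS⟩
  have hSbdd : BddAbove S := ⟨t, fun s hs => hs.1.2⟩
  set t₁ := sSup S with ht₁
  have hlub : IsLUB S t₁ := isLUB_csSup hSne hSbdd
  have ht₁mem : t₁ ∈ Icc a t := ⟨hlub.1 haS, hlub.2 (fun s hs => hs.1.2)⟩
  have ht₁Icc : t₁ ∈ Icc a b := ⟨ht₁mem.1, le_trans ht₁mem.2 ht.2⟩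
  -- continuity of z on Icc a b
  have hcont : ∀ s ∈ Icc a b, ContinuousAt z s := fun s hs => (hd s hs).continuousAt
  -- z t₁ ≤ 0
  have hzt₁ : z t₁ ≤ 0 := by
    have hcl : t₁ ∈ closure S := hlub.mem_closure hSne
    have hne : (𝓝[S] t₁).NeBot := mem_closure_iff_nhdsWithin_neBot.1 hcl
    have htend : Filter.Tendsto z (𝓝[S] t₁) (𝓝 (z t₁)) :=
      ((hcont t₁ ht₁Icc).continuousWithinAt).tendsto
    exact le_of_tendsto htend (eventually_nhdsWithin_of_forall (fun s hs => hs.2))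
  have ht₁lt : t₁ < t := lt_of_le_of_ne ht₁mem.2 (fun he => by rw [he] at hzt₁; linarith)
  -- on (t₁, t], z > 0
  have hposmid : ∀ s, t₁ < s → s ≤ t → 0 < z s := by
    intro s hs1 hs2
    by_contra hz
    push_neg at hz
    exact absurd (hlub.1 ⟨⟨le_trans ht₁mem.1 hs1.le, hs2⟩, hz⟩) (not_le.2 hs1)
  -- consider φ = z * exp(-M x), antitone on [t₁, t]
  set φ : ℝ → ℝ := fun s => z s * Real.exp (-(M * s)) with hφ
  have hφd : ∀ s ∈ Icc t₁ t, HasDerivAt φ ((z' s - M * z s) * Real.exp (-(M * s))) s := by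
    intro s hs
    have hsIcc : s ∈ Icc a b := ⟨le_trans ht₁mem.1 hs.1, le_trans hs.2 ht.2⟩
    have h1 : HasDerivAt (fun x : ℝ => Real.exp (-(M * x))) (-M * Real.exp (-(M * s))) s := by
      have := (Real.hasDerivAt_exp (-(M * s))).comp s (((hasDerivAt_id s).const_mul M).neg)
      exact this.congr_deriv (by ring)
    have := (hd s hsIcc).mul h1
    refine this.congr_deriv ?_
    ring
  have hφanti : AntitoneOn φ (Icc t₁ t) := by
    apply antitoneOn_of_deriv_nonpos (convex_Icc t₁ t)
    · exact fun s hs => (hφd s hs).continuousAt.continuousWithinAt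
    · intro s hs
      rw [interior_Icc] at hs
      exact (hφd s (Ioo_subset_Icc_self hs)).differentiableAt.differentiableWithinAt
    · intro s hs
      rw [interior_Icc] at hs
      rw [(hφd s (Ioo_subset_Icc_self hs)).deriv]
      have hzs : 0 < z s := hposmid s hs.1 hs.2.le
      have : z' s ≤ M * z s := hineq s ⟨le_trans ht₁mem.1 hs.1.le, le_trans hs.2.le ht.2⟩ hzs
      have hexp : (0:ℝ) < Real.exp (-(M * s)) := Real.exp_pos _
      nlinarith
  have h1 : φ t ≤ φ t₁ := hφanti ⟨le_refl t₁, ht₁lt.le⟩ ⟨ht₁lt.le, le_refl t⟩ ht₁lt.le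
  have h2 : φ t₁ ≤ 0 := mul_nonpos_of_nonpos_of_nonneg hzt₁ (Real.exp_pos _).le
  have h3 : 0 < φ t := mul_pos hpos (Real.exp_pos _)
  linarith

/-- If the derivative at `t` is negative, then eventually to the right `f < f t`. -/
lemma eventually_lt_right_of_deriv_neg {f : ℝ → ℝ} {d t : ℝ} (hf : HasDerivAt f d t)
    (hd : d < 0) : ∀ᶠ s in 𝓝[>] t, f s < f t := by
  have h1 : Filter.Tendsto (slope f t) (𝓝[>] t) (𝓝 d) :=
    (hasDerivAt_iff_tendsto_slope.1 hf).mono_left (nhdsWithin_mono _ (fun s hs => ne_of_gt hs))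
  have h2 : ∀ᶠ s in 𝓝[>] t, slope f t s < 0 := h1.eventually_lt_const hd
  filter_upwards [h2, self_mem_nhdsWithin] with s hs hst
  have hst' : (0:ℝ) < s - t := sub_pos.2 hst
  rw [slope_def_field] at hs
  have := (div_lt_iff₀ hst').1 hs
  linarith

lemma anti_of_deriv_nonpos {f f' : ℝ → ℝ} {a b : ℝ}
    (hd : ∀ s ∈ Icc a b, HasDerivAt f (f' s) s)
    (hle : ∀ s ∈ Icc a b, f' s ≤ 0) : AntitoneOn f (Icc a b) := by
  apply antitoneOn_of_deriv_nonpos (convex_Icc a b)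
  · exact fun s hs => (hd s hs).continuousAt.continuousWithinAt
  · intro s hs
    rw [interior_Icc] at hs
    exact (hd s (Ioo_subset_Icc_self hs)).differentiableAt.differentiableWithinAt
  · intro s hs
    rw [interior_Icc] at hs
    rw [(hd s (Ioo_subset_Icc_self hs)).deriv]
    exact hle s (Ioo_subset_Icc_self hs)



/-- The ODE (equaz): `u'' + ((n-1)/r)u' - (n-2)u³ - (2(n-1)/r)u² - ((n-1)/r²)u + (n-4)uu'
    = [u' + u/r]·h(r)`, stated pointwise at `r`. -/
def Equaz (n : ℕ) (h u u' u'' : ℝ → ℝ) (r : ℝ) : Prop :=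
  u'' r + ((n : ℝ) - 1) / r * u' r - ((n : ℝ) - 2) * u r ^ 3
    - 2 * ((n : ℝ) - 1) / r * u r ^ 2 - ((n : ℝ) - 1) / r ^ 2 * u r
    + ((n : ℝ) - 4) * u r * u' r = (u' r + u r / r) * h r

/-- `u` (with derivatives `u'`, `u''`) is a C² solution of (equaz) on the set `S`
    with initial conditions `u(0) = 0`, `u'(0) = α`. -/
def SolOn (n : ℕ) (h : ℝ → ℝ) (α : ℝ) (u u' u'' : ℝ → ℝ) (S : Set ℝ) : Prop :=
  (∀ r ∈ S, HasDerivWithinAt u (u' r) S r) ∧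
  (∀ r ∈ S, HasDerivWithinAt u' (u'' r) S r) ∧
  ContinuousOn u'' S ∧
  u 0 = 0 ∧ u' 0 = α ∧
  ∀ r ∈ S, 0 < r → Equaz n h u u' u'' r

/-- The hyperbola `h₁(r) = -(n-1+√(n-1))/((n-2)r)`. -/
noncomputable def hyperbola₁ (n : ℕ) (r : ℝ) : ℝ :=
  -(((n : ℝ) - 1) + Real.sqrt ((n : ℝ) - 1)) / (((n : ℝ) - 2) * r)

set_option maxHeartbeats 1000000 in
/-- **Proposition.** If `n ≥ 4` and `h(r) ≥ 0` for all `r ≥ 0`, then there is no global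
    C² solution `u` of (equaz) with `u(0) = 0`, `u'(0) = α ≠ 0` for which there exists
    `R > 0` with `u(R) = h₁(R)` and `u'(R) ≤ 0`. -/
theorem no_global_solution_crossing_hyperbola (n : ℕ) (hn : 4 ≤ n) (h : ℝ → ℝ)
    (hhc : ContinuousOn h (Set.Ici 0))
    (hhb : ∀ r : ℝ, 0 ≤ r → 0 ≤ h r) :
    ¬ ∃ (u u' u'' : ℝ → ℝ) (α : ℝ), α ≠ 0 ∧ SolOn n h α u u' u'' (Set.Ici 0) ∧
      ∃ R : ℝ, 0 < R ∧ u R = hyperbola₁ n R ∧ u' R ≤ 0 := by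
  rintro ⟨u, u', u'', α, hα, ⟨hu, hu', -, hu0, hu'0, heq⟩, R, hR, huR, hu'R⟩
  -- basic numeric facts
  have hn4 : (4:ℝ) ≤ (n:ℝ) := by exact_mod_cast hn
  set s1 : ℝ := Real.sqrt ((n:ℝ) - 1) with hs1
  have hs1nn : 0 ≤ s1 := Real.sqrt_nonneg _
  have hs1sq : s1 ^ 2 = (n:ℝ) - 1 := Real.sq_sqrt (by linarith)
  have hs1ge1 : 1 ≤ s1 := by
    have h := Real.sqrt_le_sqrt (show (1:ℝ) ≤ (n:ℝ) - 1 by linarith)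
    rwa [Real.sqrt_one] at h
  have hs1ub : s1 ≤ (n:ℝ) - 1 := by nlinarith
  have hn2 : (2:ℝ) ≤ (n:ℝ) - 2 := by linarith
  set c : ℝ := (((n:ℝ) - 1) + s1) / ((n:ℝ) - 2) with hc
  have hc1 : 1 ≤ c := by
    rw [hc, le_div_iff₀ (by linarith : (0:ℝ) < (n:ℝ)-2)]
    linarith
  have hc3 : c ≤ 3 := by
    rw [hc, div_le_iff₀ (by linarith : (0:ℝ) < (n:ℝ)-2)]
    linarith
  have hcpos : (0:ℝ) < c := by linarith
  -- derivative upgrade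
  have hud : ∀ r : ℝ, 0 < r → HasDerivAt u (u' r) r := fun r hr =>
    (hu r hr.le).hasDerivAt (mem_of_superset (Ioi_mem_nhds hr) Ioi_subset_Ici_self)
  have hu'd : ∀ r : ℝ, 0 < r → HasDerivAt u' (u'' r) r := fun r hr =>
    (hu' r hr.le).hasDerivAt (mem_of_superset (Ioi_mem_nhds hr) Ioi_subset_Ici_self)
  have hucont : ContinuousOn u (Ici 0) := fun r hr => (hu r hr).continuousWithinAt
  -- main quantities
  set w : ℝ → ℝ := fun r => r * u r with hw
  set W : ℝ → ℝ := fun r => u r + r * u' r with hW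
  set v : ℝ → ℝ := fun r => r * W r with hv
  set vd : ℝ → ℝ := fun r => u r + 3 * r * u' r + r ^ 2 * u'' r with hvd
  have hwd : ∀ r : ℝ, 0 < r → HasDerivAt w (W r) r := by
    intro r hr
    have := (hasDerivAt_id r).mul (hud r hr)
    exact this.congr_deriv (by simp only [hW, id]; ring)
  have hvdd : ∀ r : ℝ, 0 < r → HasDerivAt v (vd r) r := by
    intro r hr
    have h1 : HasDerivAt (fun x => x * u x + x ^ 2 * u' x) (vd r) r := by
      have ha1 := (hasDerivAt_id r).mul (hud r hr)
      have ha2 := ((hasDerivAt_pow 2 r)).mul (hu'd r hr)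
      have := ha1.add ha2
      refine this.congr_deriv ?_
      simp [hvd]; ring
    have : v = fun x => x * u x + x ^ 2 * u' x := by
      funext x; simp [hv, hW]; ring
    rw [this]
    exact h1
  have hwcont : ContinuousOn w (Ici 0) := (continuousOn_id).mul hucont
  have hwcontAt : ∀ r : ℝ, 0 < r → ContinuousAt w r := fun r hr => (hwd r hr).continuousAt
  clear_value s1 c w W v vd
  -- master identity
  have master : ∀ r : ℝ, 0 < r →
      r * vd r = v r * (r * h r) - ((n:ℝ) - 4) * (1 + w r) * v r
        + ((n:ℝ) - 2) * w r * (w r + 1) * (w r + 2) := by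
    intro r hr
    have hr0 : r ≠ 0 := ne_of_gt hr
    have E := heq r hr.le hr
    simp only [Equaz] at E
    field_simp at E
    apply mul_left_cancel₀ hr0
    simp only [hv, hW, hw, hvd]
    linear_combination r ^ 2 * E
  -- value at R
  have hwR : w R = -c := by
    have hR0 : R ≠ 0 := ne_of_gt hR
    have hn2' : ((n:ℝ) - 2) ≠ 0 := by linarith
    simp only [hw, huR, hyperbola₁, hc, ← hs1]
    field_simp
    
  have hvR : v R ≤ -c := by
    have : v R = w R + R ^ 2 * u' R := by simp [hv, hW, hw]; ring
    nlinarith [sq_nonneg R, mul_nonneg (sq_nonneg R) (neg_nonneg.2 hu'R)]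
  -- nonnegativity of the quadratic g below -c
  have hgq : ∀ x : ℝ, x ≤ -c →
      0 ≤ ((n:ℝ) - 2) * x ^ 2 + 2 * ((n:ℝ) - 1) * x + ((n:ℝ) - 1) := by
    intro x hx
    have hrw : ((n:ℝ) - 2) * c = (n:ℝ) - 1 + s1 := by
      rw [hc]; field_simp
    have h1 : ((n:ℝ) - 2) * x + ((n:ℝ) - 1) + s1 ≤ 0 := by
      have := mul_le_mul_of_nonneg_left hx (by linarith : (0:ℝ) ≤ (n:ℝ) - 2)
      nlinarith
    have h2 : ((n:ℝ) - 2) * x + ((n:ℝ) - 1) - s1 ≤ 0 := by linarith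
    nlinarith [mul_nonneg (neg_nonneg.2 h1) (neg_nonneg.2 h2)]
  -- z and its derivative
  set z : ℝ → ℝ := fun r => v r - w r with hz
  set zd : ℝ → ℝ := fun r => vd r - W r with hzdd
  clear_value z zd
  have hzRle : z R ≤ 0 := by
    have he : z R = R ^ 2 * u' R := by simp only [hz, hv, hW, hw]; ring
    rw [he]
    exact mul_nonpos_of_nonneg_of_nonpos (sq_nonneg R) hu'R
  -- Gronwall step for z
  have hzle : ∀ d, R ≤ d → (∀ s ∈ Icc R d, w s ≤ -c) → ∀ s ∈ Icc R d, z s ≤ 0 := by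
    intro d hd hwle
    have hsub : Icc R d ⊆ Ici (0:ℝ) := fun x hx => le_trans hR.le hx.1
    have hPc : ContinuousOn (fun r => (r * h r - ((n:ℝ) - 4) * (1 + w r) - 1) / r) (Icc R d) := by
      apply ContinuousOn.div
      · exact ((continuousOn_id.mul (hhc.mono hsub)).sub
          (continuousOn_const.mul (continuousOn_const.add (hwcont.mono hsub)))).sub
          continuousOn_const
      · exact continuousOn_id
      · exact fun x hx => ne_of_gt (lt_of_lt_of_le hR hx.1)
    obtain ⟨M, hM⟩ := isCompact_Icc.exists_bound_of_continuousOn hPc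
    refine sign_prop (z' := zd) (M := M) ?_ ?_ hzRle
    · intro s hs
      have hsp : 0 < s := lt_of_lt_of_le hR hs.1
      simp only [hz, hzdd]
      exact (hvdd s hsp).sub (hwd s hsp)
    · intro s hs hzpos
      have hsp : 0 < s := lt_of_lt_of_le hR hs.1
      have hm := master s hsp
      have hgs := hgq (w s) (hwle s hs)
      have hhs := hhb s hsp.le
      have expand : s * zd s = z s * (s * h s - ((n:ℝ) - 4) * (1 + w s) - 1)
          + w s * ((((n:ℝ) - 2) * (w s) ^ 2 + 2 * ((n:ℝ) - 1) * (w s) + ((n:ℝ) - 1)) + s * h s) := by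
        simp only [hz, hzdd, hv, hW, hw, hvd] at hm ⊢
        linear_combination hm
      have hwneg : w s ≤ 0 := le_trans (hwle s hs) (by linarith)
      have hkey : s * zd s ≤ (s * h s - ((n:ℝ) - 4) * (1 + w s) - 1) * z s := by
        rw [expand]
        have h2 : 0 ≤ s * h s := mul_nonneg hsp.le hhs
        linarith [mul_nonpos_of_nonpos_of_nonneg hwneg (by linarith : (0:ℝ) ≤ (((n:ℝ) - 2) * (w s) ^ 2 + 2 * ((n:ℝ) - 1) * (w s) + ((n:ℝ) - 1)) + s * h s)]
      have h3 : zd s ≤ ((s * h s - ((n:ℝ) - 4) * (1 + w s) - 1) / s) * z s := by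
        rw [div_mul_eq_mul_div, le_div_iff₀ hsp]
        linarith [hkey]
      have h4 : (s * h s - ((n:ℝ) - 4) * (1 + w s) - 1) / s ≤ M :=
        le_trans (le_abs_self _) (by simpa [Real.norm_eq_abs, abs_div] using hM s hs)
      calc zd s ≤ ((s * h s - ((n:ℝ) - 4) * (1 + w s) - 1) / s) * z s := h3
        _ ≤ M * z s := mul_le_mul_of_nonneg_right h4 hzpos.le
  -- Phase 1: w stays ≤ -c forever
  have hP1 : ∀ t, R ≤ t → w t ≤ -c := by
    intro t ht
    by_contra hbad
    push_neg at hbad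
    set B : Set ℝ := {s | s ∈ Icc R t ∧ -c < w s} with hB
    have htB : t ∈ B := ⟨⟨ht, le_refl t⟩, hbad⟩
    have hBne : B.Nonempty := ⟨t, htB⟩
    have hBbdd : BddBelow B := ⟨R, fun s hs => hs.1.1⟩
    set t₀ := sInf B with ht₀
    have hglb : IsGLB B t₀ := isGLB_csInf hBne hBbdd
    have ht₀R : R ≤ t₀ := le_csInf hBne (fun s hs => hs.1.1)
    have ht₀t : t₀ ≤ t := csInf_le hBbdd htB
    have ht₀pos : 0 < t₀ := lt_of_lt_of_le hR ht₀R
    have hnotB : ∀ s, R ≤ s → s < t₀ → w s ≤ -c := by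
      intro s hs1 hs2
      by_contra hpos
      push_neg at hpos
      exact absurd (hglb.1 ⟨⟨hs1, le_trans hs2.le ht₀t⟩, hpos⟩) (not_le.2 hs2)
    have hwle : ∀ s ∈ Icc R t₀, w s ≤ -c := by
      intro s hs
      rcases lt_or_eq_of_le hs.2 with hlt | he
      · exact hnotB s hs.1 hlt
      · rw [he]
        rcases lt_or_eq_of_le ht₀R with hltR | heR
        · -- limit from the left
          have hne : (𝓝[Ioo R t₀] t₀).NeBot := by
            rw [← mem_closure_iff_nhdsWithin_neBot, closure_Ioo (ne_of_lt hltR)]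
            exact ⟨hltR.le, le_refl t₀⟩
          have htend : Filter.Tendsto w (𝓝[Ioo R t₀] t₀) (𝓝 (w t₀)) :=
            ((hwcontAt t₀ ht₀pos).continuousWithinAt).tendsto
          exact le_of_tendsto htend
            (eventually_nhdsWithin_of_forall (fun x hx => hnotB x hx.1.le hx.2))
        · rw [← heR, hwR]
    have hz0 := hzle t₀ ht₀R hwle
    have hvt₀ : v t₀ ≤ -c := by
      have h1 := hz0 t₀ ⟨ht₀R, le_refl t₀⟩
      have h2 := hwle t₀ ⟨ht₀R, le_refl t₀⟩
      simp only [hz] at h1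
      linarith
    have hWneg : W t₀ < 0 := by
      by_contra hx
      push_neg at hx
      have : 0 ≤ t₀ * W t₀ := mul_nonneg ht₀pos.le hx
      simp only [hv] at hvt₀
      linarith
    have hev := eventually_lt_right_of_deriv_neg (hwd t₀ ht₀pos) hWneg
    have ht₀notB : t₀ ∉ B := by
      intro hmem
      have := hwle t₀ ⟨ht₀R, le_refl t₀⟩
      exact absurd hmem.2 (not_lt.2 this)
    have hBsub : B ⊆ Ioi t₀ := fun s hs =>
      lt_of_le_of_ne (hglb.1 hs) (fun he => ht₀notB (he ▸ hs))
    have hneB : (𝓝[B] t₀).NeBot :=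
      mem_closure_iff_nhdsWithin_neBot.1 (hglb.mem_closure hBne)
    have hev' : ∀ᶠ s in 𝓝[B] t₀, w s < w t₀ := hev.filter_mono (nhdsWithin_mono t₀ hBsub)
    obtain ⟨s, hws, hsB⟩ := (hev'.and self_mem_nhdsWithin).exists
    have h9 := hwle t₀ ⟨ht₀R, le_refl t₀⟩
    have h10 : -c < w s := hsB.2
    linarith
  have hzall : ∀ t, R ≤ t → z t ≤ 0 := fun t ht =>
    hzle t ht (fun s hs => hP1 s hs.1) t ⟨ht, le_refl t⟩
  have hvall : ∀ t, R ≤ t → v t ≤ -c := by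
    intro t ht
    have h1 := hzall t ht
    have h2 := hP1 t ht
    simp only [hz] at h1
    linarith
  have hWall : ∀ t, R ≤ t → W t + c / t ≤ 0 := by
    intro t ht
    have htp : 0 < t := lt_of_lt_of_le hR ht
    have h1 : t * W t ≤ -c := by
      have := hvall t ht
      simpa only [hv] using this
    have h2 : t * (W t + c / t) ≤ 0 := by
      rw [mul_add, mul_div_cancel₀ _ (ne_of_gt htp)]
      linarith
    by_contra hx
    push_neg at hx
    nlinarith
  -- logarithmic decay of w
  have hlog : ∀ t, R ≤ t → w t ≤ -c - c * (Real.log t - Real.log R) := by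
    intro t ht
    set L : ℝ → ℝ := fun r => w r + c * Real.log r with hL
    have hLd : ∀ s ∈ Icc R t, HasDerivAt L (W s + c / s) s := by
      intro s hs
      have hsp : 0 < s := lt_of_lt_of_le hR hs.1
      have h1 := (hwd s hsp).add ((Real.hasDerivAt_log (ne_of_gt hsp)).const_mul c)
      exact h1.congr_deriv (by ring)
    have hanti : AntitoneOn L (Icc R t) :=
      anti_of_deriv_nonpos hLd (fun s hs => hWall s hs.1)
    have := hanti ⟨le_refl R, ht⟩ ⟨ht, le_refl t⟩ ht
    simp only [hL, hwR] at this
    linarith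
  -- find r₁ with w r₁ = -3
  set r₂ : ℝ := R * Real.exp 2 with hr₂
  have hRr₂ : R ≤ r₂ := by
    nlinarith [Real.one_le_exp (by norm_num : (0:ℝ) ≤ 2)]
  have hlogr₂ : Real.log r₂ = Real.log R + 2 := by
    rw [hr₂, Real.log_mul (ne_of_gt hR) (Real.exp_ne_zero 2), Real.log_exp]
  have hwr₂3 : w r₂ ≤ -3 := by
    have := hlog r₂ hRr₂
    rw [hlogr₂] at this
    nlinarith
  have hwRge : -3 ≤ w R := by rw [hwR]; linarith
  have hsub₂ : Icc R r₂ ⊆ Ici (0:ℝ) := fun x hx => le_trans hR.le hx.1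
  obtain ⟨r₁, hr₁mem, hwr₁⟩ :=
    intermediate_value_Icc' hRr₂ (hwcont.mono hsub₂) (⟨hwr₂3, hwRge⟩ : (-3:ℝ) ∈ Icc (w r₂) (w R))
  have hr₁R : R ≤ r₁ := hr₁mem.1
  have hr₁pos : 0 < r₁ := lt_of_lt_of_le hR hr₁R
  -- Phase 2 quantities
  set Z : ℝ → ℝ := fun r => v r + (1/2) * (w r + 2) ^ 2 with hZ
  set Zd : ℝ → ℝ := fun r => vd r + (w r + 2) * W r with hZdd
  clear_value Z Zd
  have hZder : ∀ s : ℝ, 0 < s → HasDerivAt Z (Zd s) s := by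
    intro s hsp
    have h1 : HasDerivAt (fun x => (1/2) * (w x + 2) ^ 2) ((w s + 2) * W s) s := by
      have h2 := (((hwd s hsp).add_const 2).pow 2).const_mul (1/2)
      refine h2.congr_deriv ?_
      ring
    simp only [hZ, hZdd]
    exact (hvdd s hsp).add h1
  have hZr₁ : Z r₁ ≤ 0 := by
    have h1 := hzall r₁ hr₁R
    simp only [hz] at h1
    simp only [hZ, hwr₁]
    norm_num
    linarith
  -- Gronwall step for Z
  have hZle : ∀ d, r₁ ≤ d → (∀ s ∈ Icc r₁ d, w s ≤ -2) → ∀ s ∈ Icc r₁ d, Z s ≤ 0 := by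
    intro d hd hwle
    have hsub : Icc r₁ d ⊆ Ici (0:ℝ) := fun x hx => le_trans hr₁pos.le hx.1
    have hPc : ContinuousOn (fun r => (r * h r - ((n:ℝ) - 4) * (1 + w r) + (w r + 2)) / r)
        (Icc r₁ d) := by
      apply ContinuousOn.div
      · exact ((continuousOn_id.mul (hhc.mono hsub)).sub
          (continuousOn_const.mul (continuousOn_const.add (hwcont.mono hsub)))).add
          ((hwcont.mono hsub).add continuousOn_const)
      · exact continuousOn_id
      · exact fun x hx => ne_of_gt (lt_of_lt_of_le hr₁pos hx.1)
    obtain ⟨M, hM⟩ := isCompact_Icc.exists_bound_of_continuousOn hPc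
    refine sign_prop (z' := Zd) (M := M) ?_ ?_ hZr₁
    · intro s hs
      exact hZder s (lt_of_lt_of_le hr₁pos hs.1)
    · intro s hs hZpos
      have hsp : 0 < s := lt_of_lt_of_le hr₁pos hs.1
      have hm := master s hsp
      have hws2 := hwle s hs
      have hhs : 0 ≤ s * h s := mul_nonneg hsp.le (hhb s hsp.le)
      have expand : s * Zd s = Z s * (s * h s - ((n:ℝ) - 4) * (1 + w s) + (w s + 2))
          - (1/2) * (w s + 2) ^ 2 * (s * h s - ((n:ℝ) - 4) * (1 + w s) + (w s + 2))
          + ((n:ℝ) - 2) * w s * (w s + 1) * (w s + 2) := by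
        simp only [hZ, hZdd, hv, hW, hw, hvd] at hm ⊢
        linear_combination hm
      have e1 : 0 ≤ (1/2) * (w s + 2) ^ 2 * (s * h s) :=
        mul_nonneg (mul_nonneg (by norm_num) (sq_nonneg _)) hhs
      have e2 : 0 ≤ (1/2) * ((n:ℝ) - 4) * (-(1 + w s)) * (w s + 2) ^ 2 :=
        mul_nonneg (mul_nonneg (mul_nonneg (by linarith) (by linarith)) (by linarith)) (sq_nonneg _)
      have e3 : 0 ≤ ((n:ℝ) - 2) * ((w s + 2) * (3 * w s + 4)) :=
        mul_nonneg (by linarith) (by nlinarith)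
      have e4 : ((n:ℝ) - 5/2) * (w s + 2) ^ 3 ≤ 0 := by
        apply mul_nonpos_of_nonneg_of_nonpos (by linarith)
        have : (w s + 2) ^ 3 = (w s + 2) * (w s + 2) ^ 2 := by ring
        rw [this]
        exact mul_nonpos_of_nonpos_of_nonneg (by linarith) (sq_nonneg _)
      have hkey : s * Zd s ≤ (s * h s - ((n:ℝ) - 4) * (1 + w s) + (w s + 2)) * Z s := by
        rw [expand]
        nlinarith [e1, e2, e3, e4]
      have h3 : Zd s ≤ ((s * h s - ((n:ℝ) - 4) * (1 + w s) + (w s + 2)) / s) * Z s := by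
        rw [div_mul_eq_mul_div, le_div_iff₀ hsp]
        linarith [hkey]
      have h4 : (s * h s - ((n:ℝ) - 4) * (1 + w s) + (w s + 2)) / s ≤ M :=
        le_trans (le_abs_self _) (by simpa [Real.norm_eq_abs, abs_div] using hM s hs)
      calc Zd s ≤ ((s * h s - ((n:ℝ) - 4) * (1 + w s) + (w s + 2)) / s) * Z s := h3
        _ ≤ M * Z s := mul_le_mul_of_nonneg_right h4 hZpos.le
  -- Phase 2: w stays ≤ -2 past r₁
  have hP2 : ∀ t, r₁ ≤ t → w t ≤ -2 := by
    intro t ht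
    by_contra hbad
    push_neg at hbad
    set B : Set ℝ := {s | s ∈ Icc r₁ t ∧ -2 < w s} with hB
    have htB : t ∈ B := ⟨⟨ht, le_refl t⟩, hbad⟩
    have hBne : B.Nonempty := ⟨t, htB⟩
    have hBbdd : BddBelow B := ⟨r₁, fun s hs => hs.1.1⟩
    set t₀ := sInf B with ht₀
    have hglb : IsGLB B t₀ := isGLB_csInf hBne hBbdd
    have ht₀r₁ : r₁ ≤ t₀ := le_csInf hBne (fun s hs => hs.1.1)
    have ht₀t : t₀ ≤ t := csInf_le hBbdd htB
    have ht₀pos : 0 < t₀ := lt_of_lt_of_le hr₁pos ht₀r₁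
    have hnotB : ∀ s, r₁ ≤ s → s < t₀ → w s ≤ -2 := by
      intro s hs1 hs2
      by_contra hpos
      push_neg at hpos
      exact absurd (hglb.1 ⟨⟨hs1, le_trans hs2.le ht₀t⟩, hpos⟩) (not_le.2 hs2)
    have hwle : ∀ s ∈ Icc r₁ t₀, w s ≤ -2 := by
      intro s hs
      rcases lt_or_eq_of_le hs.2 with hlt | he
      · exact hnotB s hs.1 hlt
      · rw [he]
        rcases lt_or_eq_of_le ht₀r₁ with hltR | heR
        · have hne : (𝓝[Ioo r₁ t₀] t₀).NeBot := by
            rw [← mem_closure_iff_nhdsWithin_neBot, closure_Ioo (ne_of_lt hltR)]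
            exact ⟨hltR.le, le_refl t₀⟩
          have htend : Filter.Tendsto w (𝓝[Ioo r₁ t₀] t₀) (𝓝 (w t₀)) :=
            ((hwcontAt t₀ ht₀pos).continuousWithinAt).tendsto
          exact le_of_tendsto htend
            (eventually_nhdsWithin_of_forall (fun x hx => hnotB x hx.1.le hx.2))
        · rw [← heR, hwr₁]; norm_num
    have hZ0 := hZle t₀ ht₀r₁ hwle
    have hWle : ∀ s ∈ Icc r₁ t₀, W s ≤ 0 := by
      intro s hs
      have hsp : 0 < s := lt_of_lt_of_le hr₁pos hs.1
      have h1 := hZ0 s hs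
      simp only [hZ, hv] at h1
      by_contra hx
      push_neg at hx
      nlinarith [sq_nonneg (w s + 2), mul_pos hsp hx]
    have hanti : AntitoneOn w (Icc r₁ t₀) :=
      anti_of_deriv_nonpos (fun s hs => hwd s (lt_of_lt_of_le hr₁pos hs.1)) hWle
    have hwt₀ : w t₀ ≤ -3 := by
      have := hanti ⟨le_refl r₁, ht₀r₁⟩ ⟨ht₀r₁, le_refl t₀⟩ ht₀r₁
      rw [hwr₁] at this
      exact this
    have hev : ∀ᶠ s in 𝓝 t₀, w s < -2 :=
      ((hwcontAt t₀ ht₀pos).tendsto).eventually_lt_const (by linarith)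
    have hneB : (𝓝[B] t₀).NeBot :=
      mem_closure_iff_nhdsWithin_neBot.1 (hglb.mem_closure hBne)
    have hev' : ∀ᶠ s in 𝓝[B] t₀, w s < -2 := hev.filter_mono nhdsWithin_le_nhds
    obtain ⟨s, hws, hsB⟩ := (hev'.and self_mem_nhdsWithin).exists
    have h10 : -2 < w s := hsB.2
    linarith
  -- consequences past r₁
  have hZall : ∀ t, r₁ ≤ t → Z t ≤ 0 := fun t ht =>
    hZle t ht (fun s hs => hP2 s hs.1) t ⟨ht, le_refl t⟩
  have hW3 : ∀ t, r₁ ≤ t → t * W t ≤ -(1/2) * (w t + 2) ^ 2 := by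
    intro t ht
    have h1 := hZall t ht
    simp only [hZ, hv] at h1
    linarith
  have hWneg3 : ∀ t, r₁ ≤ t → W t ≤ 0 := by
    intro t ht
    have htp : 0 < t := lt_of_lt_of_le hr₁pos ht
    have h1 := hW3 t ht
    by_contra hx
    push_neg at hx
    nlinarith [sq_nonneg (w t + 2), mul_pos htp hx]
  have hw3 : ∀ t, r₁ ≤ t → w t ≤ -3 := by
    intro t ht
    have hanti : AntitoneOn w (Icc r₁ t) :=
      anti_of_deriv_nonpos (fun s hs => hwd s (lt_of_lt_of_le hr₁pos hs.1))
        (fun s hs => hWneg3 s hs.1)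
    have := hanti ⟨le_refl r₁, ht⟩ ⟨ht, le_refl t⟩ ht
    rw [hwr₁] at this
    exact this
  -- Phase 3: finite-time blow-up of w, contradiction
  set b : ℝ := r₁ * Real.exp 4 with hbdef
  have hr₁b : r₁ ≤ b := by
    nlinarith [Real.one_le_exp (by norm_num : (0:ℝ) ≤ 4)]
  set Y : ℝ → ℝ := fun r => -(w r + 2)⁻¹ + (1/2) * Real.log r with hY
  have hYd : ∀ s ∈ Icc r₁ b, HasDerivAt Y (W s / (w s + 2) ^ 2 + (1/2) / s) s := by
    intro s hs
    have hsp : 0 < s := lt_of_lt_of_le hr₁pos hs.1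
    have hwne : w s + 2 ≠ 0 := by have := hw3 s hs.1; intro hcon; linarith
    have h1 : HasDerivAt (fun x => (w x + 2)⁻¹) (-(W s) / (w s + 2) ^ 2) s :=
      ((hwd s hsp).add_const 2).inv hwne
    have h2 := h1.neg.add ((Real.hasDerivAt_log (ne_of_gt hsp)).const_mul (1/2))
    refine h2.congr_deriv ?_
    ring
  have hYanti : AntitoneOn Y (Icc r₁ b) := by
    apply anti_of_deriv_nonpos hYd
    intro s hs
    have hsp : 0 < s := lt_of_lt_of_le hr₁pos hs.1
    have hwle := hw3 s hs.1
    have hsq : (0:ℝ) < (w s + 2) ^ 2 :=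
      pow_two_pos_of_ne_zero (show w s + 2 < 0 by linarith).ne
    have key := hW3 s hs.1
    have h5 : W s / (w s + 2) ^ 2 ≤ (-(1/2)) / s := by
      rw [div_le_div_iff₀ hsq hsp]
      linarith [key]
    have h6 : (-(1/2) : ℝ) / s = -((1/2) / s) := by ring
    rw [h6] at h5
    linarith
  have hYfin := hYanti ⟨le_refl r₁, hr₁b⟩ ⟨hr₁b, le_refl b⟩ hr₁b
  have hlogb : Real.log b = Real.log r₁ + 4 := by
    rw [hbdef, Real.log_mul (ne_of_gt hr₁pos) (Real.exp_ne_zero 4), Real.log_exp]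
  have hwb : w b ≤ -3 := hw3 b hr₁b
  have hinvb : (w b + 2)⁻¹ < 0 := inv_lt_zero.mpr (by linarith)
  simp only [hY, hlogb, hwr₁] at hYfin
  norm_num at hYfin
  -- hYfin : -(w b + 2)⁻¹ + (1/2) * (log r₁ + 4) ≤ 1 + (1/2) * log r₁
  linarith
end

section
/- Let n ≥ 2 be an integer, take h ≡ 0, and for a > 0 define ū_a(r) = −2ar/(1 + ar²). Then ū_a is a global C² solution on [0,∞) of the ODE u''(r) + ((n-1)/r)u'(r) − (n-2)u(r)³ − (2(n-1)/r)u(r)² − ((n-1)/r²)u(r) + (n-4)u(r)u'(r) = 0 with initial conditions ū_a(0) = 0 and ū_a'(0) = −2a. -/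
/-- The explicit function `ū_a(r) = -2ar/(1 + ar²)`. -/
noncomputable def ubar (a : ℝ) : ℝ → ℝ := fun r => -(2 * a * r) / (1 + a * r ^ 2)

/-- **Explicit global solutions for `h ≡ 0`.** For `a > 0`, the function
    `ū_a(r) = -2ar/(1+ar²)` is a global C² solution on `[0,∞)` of (equaz) with `h ≡ 0`,
    with initial conditions `ū_a(0) = 0` and `ū_a'(0) = -2a`. -/
theorem ubar_global_solution (n : ℕ) (hn : 2 ≤ n) (a : ℝ) (ha : 0 < a) :
    ContDiffOn ℝ 2 (ubar a) (Set.Ici 0) ∧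
    ubar a 0 = 0 ∧
    HasDerivAt (ubar a) (-(2 * a)) 0 ∧
    ∀ r : ℝ, 0 < r →
      Equaz n (fun _ => 0) (ubar a) (deriv (ubar a)) (deriv (deriv (ubar a))) r := by
  have hD : ∀ r : ℝ, 1 + a * r ^ 2 ≠ 0 := fun r => by positivity
  -- first derivative
  have hd1 : ∀ r : ℝ, HasDerivAt (ubar a)
      ((2 * a * (a * r ^ 2 - 1)) / (1 + a * r ^ 2) ^ 2) r := by
    intro r
    have h1 : HasDerivAt (fun x : ℝ => -(2 * a * x)) (-(2 * a)) r := by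
      exact ((hasDerivAt_id r).const_mul (2 * a)).neg.congr_deriv (by simp)
    have h2 : HasDerivAt (fun x : ℝ => 1 + a * x ^ 2) (a * (2 * r)) r := by
      have := ((hasDerivAt_pow 2 r).const_mul a).const_add 1
      simpa using this
    have h3 := h1.div h2 (hD r)
    refine h3.congr_deriv ?_
    field_simp
    ring
  have hderiv1 : deriv (ubar a) =
      fun r => (2 * a * (a * r ^ 2 - 1)) / (1 + a * r ^ 2) ^ 2 :=
    funext fun r => (hd1 r).deriv
  -- second derivative
  have hd2 : ∀ r : ℝ, HasDerivAt (fun r => (2 * a * (a * r ^ 2 - 1)) / (1 + a * r ^ 2) ^ 2)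
      ((4 * a ^ 2 * r * (3 - a * r ^ 2)) / (1 + a * r ^ 2) ^ 3) r := by
    intro r
    have h1 : HasDerivAt (fun x : ℝ => 2 * a * (a * x ^ 2 - 1)) (2 * a * (a * (2 * r))) r := by
      have := (((hasDerivAt_pow 2 r).const_mul a).sub_const 1).const_mul (2 * a)
      simpa using this
    have h2 : HasDerivAt (fun x : ℝ => 1 + a * x ^ 2) (a * (2 * r)) r := by
      have := ((hasDerivAt_pow 2 r).const_mul a).const_add 1
      simpa using this
    have h2' : HasDerivAt (fun x : ℝ => (1 + a * x ^ 2) ^ 2)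
        (↑2 * (1 + a * r ^ 2) ^ 1 * (a * (2 * r))) r := h2.pow 2
    have h3 := h1.div h2' (pow_ne_zero 2 (hD r))
    refine h3.congr_deriv ?_
    have := hD r
    field_simp
    ring
  constructor
  · have : ContDiff ℝ 2 (ubar a) := by
      apply ContDiff.div
      · fun_prop
      · fun_prop
      · exact hD
    exact this.contDiffOn
  refine ⟨by simp [ubar], ?_, ?_⟩
  · have := hd1 0
    convert this using 1
    norm_num
  · intro r hr
    have hr' : r ≠ 0 := ne_of_gt hr
    have hderiv2 : deriv (deriv (ubar a)) r =
        (4 * a ^ 2 * r * (3 - a * r ^ 2)) / (1 + a * r ^ 2) ^ 3 := by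
      rw [hderiv1]; exact (hd2 r).deriv
    unfold Equaz
    rw [hderiv1, (hd2 r).deriv]
    simp only [ubar]
    have hDr := hD r
    field_simp
    ring
end

section
/- Let n ≥ 2 be an integer, take h ≡ 0, and for a < 0 define ū_a(r) = −2ar/(1 + ar²) on [0, 1/√|a|). Then ū_a is a C² solution of the ODE u''(r) + ((n-1)/r)u'(r) − (n-2)u(r)³ − (2(n-1)/r)u(r)² − ((n-1)/r²)u(r) + (n-4)u(r)u'(r) = 0 with ū_a(0) = 0, ū_a'(0) = −2a > 0, and ū_a(r) → +∞ as r → 1/√|a|; in particular ū_a is not global. -/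
/-- First derivative candidate of `ū_a`. -/
noncomputable def ubar1 (a : ℝ) : ℝ → ℝ := fun r => (-(2*a) + 2*a^2*r^2) / (1 + a*r^2)^2

lemma hasDerivAt_den (a r : ℝ) : HasDerivAt (fun x => 1 + a * x ^ 2) (2*a*r) r := by
  have h := ((hasDerivAt_pow 2 r).const_mul a).const_add 1
  simpa [mul_comm, mul_assoc, mul_left_comm] using h

lemma hasDerivAt_ubar (a r : ℝ) (hD : 1 + a * r ^ 2 ≠ 0) :
    HasDerivAt (ubar a) (ubar1 a r) r := by
  have hnum : HasDerivAt (fun x : ℝ => -(2 * a * x)) (-(2*a)) r := by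
    simpa using ((hasDerivAt_id r).const_mul (2*a)).fun_neg
  have h := hnum.div (hasDerivAt_den a r) hD
  refine h.congr_deriv ?_
  unfold ubar1
  field_simp
  ring

lemma hasDerivAt_ubar1 (a r : ℝ) (hD : 1 + a * r ^ 2 ≠ 0) :
    HasDerivAt (ubar1 a) ((12*a^2*r - 4*a^3*r^3) / (1 + a*r^2)^3) r := by
  have hnum : HasDerivAt (fun x : ℝ => -(2*a) + 2*a^2*x^2) (4*a^2*r) r := by
    have h := ((hasDerivAt_pow 2 r).const_mul (2*a^2)).const_add (-(2*a))
    refine h.congr_deriv ?_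
    ring
  have hden : HasDerivAt (fun x : ℝ => (1 + a*x^2)^2) (2 * (1 + a*r^2) * (2*a*r)) r := by
    simpa using (hasDerivAt_den a r).fun_pow 2
  have hD2 : (1 + a*r^2)^2 ≠ 0 := pow_ne_zero _ hD
  have h := hnum.div hden hD2
  refine h.congr_deriv ?_
  field_simp
  ring

lemma isOpen_D (a : ℝ) : IsOpen {x : ℝ | 1 + a * x ^ 2 ≠ 0} := by
  have : Continuous fun x : ℝ => 1 + a * x ^ 2 := by continuity
  exact isOpen_compl_singleton.preimage this

lemma deriv_ubar_eq (a r : ℝ) (hD : 1 + a * r ^ 2 ≠ 0) :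
    deriv (ubar a) r = ubar1 a r := (hasDerivAt_ubar a r hD).deriv

lemma deriv_deriv_ubar_eq (a r : ℝ) (hD : 1 + a * r ^ 2 ≠ 0) :
    deriv (deriv (ubar a)) r = (12*a^2*r - 4*a^3*r^3) / (1 + a*r^2)^3 := by
  have hev : deriv (ubar a) =ᶠ[nhds r] ubar1 a := by
    filter_upwards [(isOpen_D a).mem_nhds hD] with x hx
    exact deriv_ubar_eq a x hx
  rw [hev.deriv_eq]
  exact (hasDerivAt_ubar1 a r hD).deriv

/-- **Blow-up of `ū_a` for `a < 0`.** For `a < 0`, the function `ū_a(r) = -2ar/(1+ar²)`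
    is a C² solution of (equaz) with `h ≡ 0` on `[0, 1/√|a|)`, with `ū_a(0) = 0`,
    `ū_a'(0) = -2a > 0`, and it blows up: `ū_a(r) → +∞` as `r → 1/√|a|` from the left;
    in particular it is not global. -/
theorem ubar_blow_up (n : ℕ) (hn : 2 ≤ n) (a : ℝ) (ha : a < 0) :
    ubar a 0 = 0 ∧
    HasDerivAt (ubar a) (-(2 * a)) 0 ∧
    0 < -(2 * a) ∧
    (∀ r : ℝ, 0 < r → r < 1 / Real.sqrt |a| →
      Equaz n (fun _ => 0) (ubar a) (deriv (ubar a)) (deriv (deriv (ubar a))) r) ∧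
    Filter.Tendsto (ubar a)
      (nhdsWithin (1 / Real.sqrt |a|) (Set.Iio (1 / Real.sqrt |a|))) Filter.atTop := by
  set R : ℝ := 1 / Real.sqrt |a| with hRdef
  have habs : |a| = -a := abs_of_neg ha
  have hapos : (0:ℝ) < |a| := abs_pos.mpr ha.ne
  have hs : 0 < Real.sqrt |a| := Real.sqrt_pos.mpr hapos
  have hR : 0 < R := by positivity
  have hR2 : R ^ 2 = 1 / |a| := by
    rw [hRdef, div_pow, one_pow, Real.sq_sqrt hapos.le]
  have haR2 : a * R ^ 2 = -1 := by
    rw [hR2, habs]; field_simp; rw [div_self ha.ne]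
  have hDpos : ∀ r : ℝ, -R < r → r < R → 0 < 1 + a * r ^ 2 := by
    intro r h1 h2
    have hsq : r ^ 2 < R ^ 2 := sq_lt_sq' h1 h2
    nlinarith
  refine ⟨by simp [ubar], ?_, by linarith, ?_, ?_⟩
  · have h := hasDerivAt_ubar a 0 (by norm_num)
    simpa [ubar1] using h
  · intro r hr hrR
    have hD : 0 < 1 + a * r ^ 2 := hDpos r (by linarith) hrR
    have hDne := hD.ne'
    unfold Equaz
    rw [deriv_ubar_eq a r hDne, deriv_deriv_ubar_eq a r hDne]
    simp only [ubar, ubar1]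
    field_simp
    ring
  · have hfun : ubar a = fun r => -(2 * a * r) * (1 + a * r ^ 2)⁻¹ := by
      funext r; simp [ubar, div_eq_mul_inv]
    rw [hfun]
    have hden : Filter.Tendsto (fun r => 1 + a * r ^ 2)
        (nhdsWithin R (Set.Iio R)) (nhdsWithin 0 (Set.Ioi 0)) := by
      rw [tendsto_nhdsWithin_iff]
      constructor
      · have hc : Continuous fun r : ℝ => 1 + a * r ^ 2 := by continuity
        have h2 := (hc.tendsto R).mono_left (nhdsWithin_le_nhds (s := Set.Iio R))
        simpa [haR2] using h2
      · filter_upwards [mem_nhdsWithin_of_mem_nhds (Ioi_mem_nhds (by linarith : -R < R)),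
          self_mem_nhdsWithin] with r h1 h2
        exact hDpos r h1 h2
    have hinv : Filter.Tendsto (fun r => (1 + a * r ^ 2)⁻¹)
        (nhdsWithin R (Set.Iio R)) Filter.atTop :=
      tendsto_inv_nhdsGT_zero.comp hden
    have hnum : Filter.Tendsto (fun r => -(2 * a * r))
        (nhdsWithin R (Set.Iio R)) (nhds (-(2 * a * R))) := by
      have hc : Continuous fun r : ℝ => -(2 * a * r) := by continuity
      exact (hc.tendsto R).mono_left nhdsWithin_le_nhds
    have hcpos : 0 < -(2 * a * R) := by nlinarith
    exact Filter.Tendsto.pos_mul_atTop hcpos hnum hinv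
end

section
/- For h ≡ 0, define for r > 0 the functions φ(r) = −(n−1+√(n−1))/((n−2)r), ψ(r) = (1−n+√(n−1))/((n−2)r), and ū₁(r) = −2r/(1+r²). If n ∈ {3,4,5}, then there exists ρ > 0 such that φ(r) < ū₁(r) < ψ(r) for all r > ρ. -/
/-- **Asymptotic position of `ū₁` in low dimensions.** For `n ∈ {3,4,5}`, with
    `φ(r) = -(n-1+√(n-1))/((n-2)r)`, `ψ(r) = (1-n+√(n-1))/((n-2)r)` and
    `ū₁(r) = -2r/(1+r²)`, there exists `ρ > 0` such that `φ(r) < ū₁(r) < ψ(r)`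
    for all `r > ρ`. -/
theorem ubar_eventually_between (n : ℕ) (hn : n = 3 ∨ n = 4 ∨ n = 5) :
    ∃ ρ : ℝ, 0 < ρ ∧ ∀ r : ℝ, ρ < r →
      -(((n : ℝ) - 1) + Real.sqrt ((n : ℝ) - 1)) / (((n : ℝ) - 2) * r)
          < -(2 * r) / (1 + r ^ 2) ∧
      -(2 * r) / (1 + r ^ 2)
          < (1 - (n : ℝ) + Real.sqrt ((n : ℝ) - 1)) / (((n : ℝ) - 2) * r) := by
  refine ⟨1, one_pos, fun r hr => ?_⟩
  have hr0 : (0:ℝ) < r := lt_trans one_pos hr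
  have hr2 : (0:ℝ) < 1 + r ^ 2 := by positivity
  rcases hn with h | h | h <;> subst h <;> push_cast <;> norm_num
  · have hs : Real.sqrt 2 ^ 2 = 2 := Real.sq_sqrt (by norm_num)
    have hsn : (0:ℝ) ≤ Real.sqrt 2 := Real.sqrt_nonneg 2
    constructor
    · rw [div_lt_div_iff₀ hr0 hr2]
      nlinarith [sq_nonneg r]
    · rw [div_lt_div_iff₀ hr2 hr0]
      nlinarith [sq_nonneg (r - 1), sq_nonneg (Real.sqrt 2 - 1)]
  · have hs : Real.sqrt 3 ^ 2 = 3 := Real.sq_sqrt (by norm_num)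
    have hsn : (0:ℝ) ≤ Real.sqrt 3 := Real.sqrt_nonneg 3
    constructor
    · rw [div_lt_div_iff₀ (by positivity) hr2]
      nlinarith [sq_nonneg r, sq_nonneg (Real.sqrt 3 - 1)]
    · rw [div_lt_div_iff₀ hr2 (by positivity)]
      nlinarith [sq_nonneg (r - 1), sq_nonneg (Real.sqrt 3 - 1)]
  · have hs : Real.sqrt 4 = 2 := by
      rw [show (4:ℝ) = 2 ^ 2 by norm_num, Real.sqrt_sq (by norm_num)]
    constructor
    · rw [div_lt_div_iff₀ (by positivity) hr2]
      nlinarith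
    · rw [div_lt_div_iff₀ hr2 (by positivity)]
      nlinarith
end

section
/- Let n ≥ 2 be an integer, let h be continuous on [0,∞), and let u be a C² solution on an interval I ⊆ (0,∞) of the ODE u''(r) + ((n-1)/r)u'(r) − (n-2)u(r)³ − (2(n-1)/r)u(r)² − ((n-1)/r²)u(r) + (n-4)u(r)u'(r) = [u'(r) + u(r)/r]·h(r). Then the function v(r) = r·u(r) satisfies on I the equation v''(r) + [(n−3)/r + ((n−4)/r)v(r) − h(r)]·v'(r) = ((n−2)/r²)·(v(r)+2)(v(r)+1)v(r). -/
/-- **Change of variable.** If `u` is a C² solution of (equaz) on an interval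
    `I ⊆ (0,∞)`, then `v(r) = r·u(r)` satisfies on `I` the equation (equv):
    `v'' + [(n-3)/r + ((n-4)/r)v - h(r)]·v' = ((n-2)/r²)·(v+2)(v+1)v`. -/
theorem change_of_variable (n : ℕ) (hn : 2 ≤ n) (h : ℝ → ℝ)
    (hhc : ContinuousOn h (Set.Ici 0))
    (I : Set ℝ) (hI : I ⊆ Set.Ioi 0)
    (u u' u'' : ℝ → ℝ)
    (hu : ∀ r ∈ I, HasDerivWithinAt u (u' r) I r)
    (hu' : ∀ r ∈ I, HasDerivWithinAt u' (u'' r) I r)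
    (hu'' : ContinuousOn u'' I)
    (hode : ∀ r ∈ I, Equaz n h u u' u'' r) :
    ∃ v' v'' : ℝ → ℝ,
      (∀ r ∈ I, HasDerivWithinAt (fun s => s * u s) (v' r) I r) ∧
      (∀ r ∈ I, HasDerivWithinAt v' (v'' r) I r) ∧
      ∀ r ∈ I,
        v'' r + (((n : ℝ) - 3) / r + ((n : ℝ) - 4) / r * (r * u r) - h r) * v' r
          = ((n : ℝ) - 2) / r ^ 2 * ((r * u r + 2) * (r * u r + 1) * (r * u r)) := by
  refine ⟨fun r => u r + r * u' r, fun r => 2 * u' r + r * u'' r, ?_, ?_, ?_⟩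
  · intro r hr
    have := (hasDerivWithinAt_id r I).mul (hu r hr)
    simpa [add_comm, Pi.mul_def] using this
  · intro r hr
    have := (hu r hr).add ((hasDerivWithinAt_id r I).mul (hu' r hr))
    simp only [id, Pi.mul_def, Pi.add_def] at this
    refine this.congr_deriv ?_
    ring
  · intro r hr
    have hrpos : (0:ℝ) < r := hI hr
    have hrne : r ≠ 0 := ne_of_gt hrpos
    have e := hode r hr
    unfold Equaz at e
    field_simp at e ⊢
    nlinarith [e, sq_nonneg r, mul_pos hrpos hrpos]
end

section
/- Let n ≥ 3 be an integer and let h be continuous on [0,∞) with h(r) ≥ −(n−1)/r for all r > 0. Let u ∈ C²[0,R) be the solution of the ODE u''(r) + ((n-1)/r)u'(r) − (n-2)u(r)³ − (2(n-1)/r)u(r)² − ((n-1)/r²)u(r) + (n-4)u(r)u'(r) = [u'(r) + u(r)/r]·h(r) with u(0) = 0 and u'(0) = α > 0, defined on its maximal interval [0,R). Then u(r) > 0 and u'(r) > 0 for all r ∈ (0,R). -/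
/-- `[0,R)` is a maximal interval of existence for the solution `u`:
    `u` admits no extension to a solution on a strictly larger interval `[0,R')`. -/
def MaximalOn (n : ℕ) (h : ℝ → ℝ) (α : ℝ) (u : ℝ → ℝ) (R : ℝ) : Prop :=
  ¬ ∃ (R' : ℝ) (v v' v'' : ℝ → ℝ), R < R' ∧
      SolOn n h α v v' v'' (Set.Ico 0 R') ∧ Set.EqOn v u (Set.Ico 0 R)

/-- **Monotonicity on the maximal interval.** For `n ≥ 3`, `h` continuous on `[0,∞)`
    with `h(r) ≥ -(n-1)/r` for `r > 0`, and `α > 0`, the solution of (equaz)-(ic) on its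
    maximal interval `[0,R)` satisfies `u(r) > 0` and `u'(r) > 0` for all `r ∈ (0,R)`. -/
theorem positive_increasing_on_maximal_interval (n : ℕ) (hn : 3 ≤ n) (h : ℝ → ℝ)
    (hhc : ContinuousOn h (Set.Ici 0))
    (hhb : ∀ r : ℝ, 0 < r → -((n : ℝ) - 1) / r ≤ h r)
    (α : ℝ) (hα : 0 < α) (R : ℝ) (hR : 0 < R)
    (u u' u'' : ℝ → ℝ)
    (hu : SolOn n h α u u' u'' (Set.Ico 0 R))
    (hmax : MaximalOn n h α u R) :
    ∀ r ∈ Set.Ioo 0 R, 0 < u r ∧ 0 < u' r := by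
  obtain ⟨hderivu, hderivu', hcont'', hu0, hu'0, heq⟩ := hu
  have hcu : ContinuousOn u (Set.Ico 0 R) := fun r hr => (hderivu r hr).continuousWithinAt
  have hcu' : ContinuousOn u' (Set.Ico 0 R) := fun r hr => (hderivu' r hr).continuousWithinAt
  have hmem : ∀ r ∈ Set.Ioo 0 R, Set.Ico 0 R ∈ nhds r := fun r hr =>
    Ico_mem_nhds hr.1 hr.2
  have hDu : ∀ r ∈ Set.Ioo 0 R, HasDerivAt u (u' r) r := fun r hr =>
    (hderivu r ⟨hr.1.le, hr.2⟩).hasDerivAt (hmem r hr)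
  have hDu' : ∀ r ∈ Set.Ioo 0 R, HasDerivAt u' (u'' r) r := fun r hr =>
    (hderivu' r ⟨hr.1.le, hr.2⟩).hasDerivAt (hmem r hr)
  have key : ∀ r ∈ Set.Ioo 0 R, 0 < u' r := by
    by_contra hc
    push_neg at hc
    obtain ⟨t, ht, htle⟩ := hc
    set T := {r | r ∈ Set.Ioo 0 R ∧ u' r ≤ 0} with hT
    -- u' > 0 near 0
    have hεex : ∃ ε > 0, ∀ x, dist x 0 < ε → x ∈ Set.Ico 0 R → 0 < u' x := by
      have h0 : ContinuousWithinAt u' (Set.Ico 0 R) 0 := hcu' 0 ⟨le_refl 0, hR⟩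
      have hev : ∀ᶠ x in nhdsWithin 0 (Set.Ico 0 R), 0 < u' x := by
        have : (0:ℝ) < u' 0 := by rw [hu'0]; exact hα
        exact h0.eventually (eventually_gt_nhds this) |>.mono (fun x hx => hx)
      rw [eventually_nhdsWithin_iff] at hev
      rw [Metric.eventually_nhds_iff] at hev
      obtain ⟨ε, hε, hball⟩ := hev
      exact ⟨ε, hε, fun x hx hxS => hball hx hxS⟩
    obtain ⟨ε, hε, hεpos⟩ := hεex
    have hTbdd : BddBelow T := ⟨0, fun x hx => hx.1.1.le⟩
    have hTne : T.Nonempty := ⟨t, ht, htle⟩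
    set r₀ := sInf T with hr₀def
    have hr₀lb : ∀ x ∈ T, ε ≤ x := by
      intro x hx
      by_contra hlt
      push_neg at hlt
      have hdx : dist x 0 < ε := by
        rw [Real.dist_eq, sub_zero, abs_of_nonneg hx.1.1.le]; exact hlt
      have := hεpos x hdx ⟨hx.1.1.le, hx.1.2⟩
      linarith [hx.2]
    have hr₀ε : ε ≤ r₀ := le_csInf hTne hr₀lb
    have hr₀lt : r₀ < R := lt_of_le_of_lt (csInf_le hTbdd ⟨ht, htle⟩) ht.2
    have hr₀pos : 0 < r₀ := lt_of_lt_of_le hε hr₀ε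
    have hr₀Ioo : r₀ ∈ Set.Ioo 0 R := ⟨hr₀pos, hr₀lt⟩
    have hcontAt : ContinuousAt u' r₀ := (hDu' r₀ hr₀Ioo).continuousAt
    have hclos : r₀ ∈ closure T := csInf_mem_closure hTne hTbdd
    have hNeBot : (nhdsWithin r₀ T).NeBot := mem_closure_iff_nhdsWithin_neBot.mp hclos
    have hle0 : u' r₀ ≤ 0 := by
      refine le_of_tendsto (hcontAt.tendsto.mono_left
        (nhdsWithin_le_nhds : nhdsWithin r₀ T ≤ nhds r₀)) ?_
      filter_upwards [self_mem_nhdsWithin] with x hx using hx.2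
    have hpos : ∀ x ∈ Set.Ioo 0 r₀, 0 < u' x := by
      intro x hx
      by_contra hno
      push_neg at hno
      have hxT : x ∈ T := ⟨⟨hx.1, lt_trans hx.2 hr₀lt⟩, hno⟩
      exact absurd (csInf_le hTbdd hxT) (not_le.mpr hx.2)
    have hIooMem : Set.Ioo 0 r₀ ∈ nhdsWithin r₀ (Set.Iio r₀) :=
      Ioo_mem_nhdsLT_of_mem ⟨hr₀pos, le_refl r₀⟩
    have hge0 : 0 ≤ u' r₀ := by
      refine ge_of_tendsto (hcontAt.tendsto.mono_left
        (nhdsWithin_le_nhds : nhdsWithin r₀ (Set.Iio r₀) ≤ nhds r₀)) ?_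
      filter_upwards [hIooMem] with x hx using (hpos x hx).le
    have hu'r₀ : u' r₀ = 0 := le_antisymm hle0 hge0
    -- u r₀ > 0 by strict monotonicity
    have hsub : Set.Icc (0:ℝ) r₀ ⊆ Set.Ico 0 R :=
      fun x hx => ⟨hx.1, lt_of_le_of_lt hx.2 hr₀lt⟩
    have hmono : StrictMonoOn u (Set.Icc 0 r₀) := by
      refine strictMonoOn_of_deriv_pos (convex_Icc 0 r₀) (hcu.mono hsub) ?_
      intro x hx
      rw [interior_Icc] at hx
      have hxI : x ∈ Set.Ioo 0 R := ⟨hx.1, lt_trans hx.2 hr₀lt⟩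
      rw [(hDu x hxI).deriv]
      exact hpos x hx
    have hur₀ : 0 < u r₀ := by
      have := hmono ⟨le_refl 0, hr₀pos.le⟩ ⟨hr₀pos.le, le_refl r₀⟩ hr₀pos
      rwa [hu0] at this
    -- ODE at r₀ gives u'' r₀ > 0
    have heq₀ := heq r₀ ⟨hr₀pos.le, hr₀lt⟩ hr₀pos
    unfold Equaz at heq₀
    rw [hu'r₀] at heq₀
    simp only [mul_zero, add_zero, zero_add] at heq₀
    have hcn : (3:ℝ) ≤ (n:ℝ) := by exact_mod_cast hn
    have hh := hhb r₀ hr₀pos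
    have hupos : 0 < u r₀ / r₀ := div_pos hur₀ hr₀pos
    have hmul : (u r₀ / r₀) * (-((n:ℝ) - 1) / r₀) ≤ (u r₀ / r₀) * h r₀ :=
      mul_le_mul_of_nonneg_left hh hupos.le
    have key1 : (u r₀ / r₀) * (-((n:ℝ) - 1) / r₀) = -(((n:ℝ) - 1) / r₀ ^ 2 * u r₀) := by
      field_simp
    have hA : 0 < ((n:ℝ) - 2) * u r₀ ^ 3 :=
      mul_pos (by linarith) (pow_pos hur₀ 3)
    have hB : 0 < 2 * ((n:ℝ) - 1) / r₀ * u r₀ ^ 2 :=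
      mul_pos (div_pos (by linarith) hr₀pos) (pow_pos hur₀ 2)
    have hQ : 0 < u'' r₀ := by linarith
    -- contradiction: u' must be negative just left of r₀
    have hslope := hasDerivAt_iff_tendsto_slope.mp (hDu' r₀ hr₀Ioo)
    have hslope' : Filter.Tendsto (slope u' r₀) (nhdsWithin r₀ (Set.Iio r₀)) (nhds (u'' r₀)) :=
      hslope.mono_left (nhdsWithin_mono _ (fun x hx => ne_of_lt hx))
    have hev : ∀ᶠ x in nhdsWithin r₀ (Set.Iio r₀), 0 < slope u' r₀ x :=
      hslope'.eventually (eventually_gt_nhds hQ)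
    obtain ⟨x, hx1, hx2⟩ := (hev.and (Filter.eventually_iff.mpr (by exact hIooMem))).exists
    have hxpos := hpos x hx2
    have hden : x - r₀ < 0 := by linarith [hx2.2]
    have : slope u' r₀ x < 0 := by
      rw [slope_def_field]
      rw [hu'r₀, sub_zero]
      exact div_neg_of_pos_of_neg hxpos hden
    linarith
  intro r hr
  refine ⟨?_, key r hr⟩
  have hsub : Set.Icc (0:ℝ) r ⊆ Set.Ico 0 R :=
    fun x hx => ⟨hx.1, lt_of_le_of_lt hx.2 hr.2⟩
  have hmono : StrictMonoOn u (Set.Icc 0 r) := by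
    refine strictMonoOn_of_deriv_pos (convex_Icc 0 r) (hcu.mono hsub) ?_
    intro x hx
    rw [interior_Icc] at hx
    have hxI : x ∈ Set.Ioo 0 R := ⟨hx.1, lt_trans hx.2 hr.2⟩
    rw [(hDu x hxI).deriv]
    exact key x hxI
  have := hmono ⟨le_refl 0, hr.1.le⟩ ⟨hr.1.le, le_refl r⟩ hr.1
  rwa [hu0] at this
end

section
/- Let n ≥ 2 be an integer, h continuous on [0,∞), and let v ∈ C²[0,R] with v(0) = 0 satisfy on (0,R] the equation v''(r) + [(n−3)/r + ((n−4)/r)v(r) − h(r)]·v'(r) = ((n−2)/r²)·(v(r)+2)(v(r)+1)v(r), with −2 < v(r) < 0 for 0 < r < R and v(R) = 0 or v(R) = −2. Then ∫₀^R [n−4 + (n−4)v(r) − r·h(r)]·r·v'(r)² dr + R²·v'(R)²/2 = 0. In particular, if n = 4 and h(r) ≤ 0 for all r > 0, no such R can exist. -/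
open MeasureTheory

set_option maxHeartbeats 1600000 in
/-- **Integral identity for the transformed equation (equv).** Let `v ∈ C²[0,R]` with
    `v(0) = 0` satisfy on `(0,R]` the equation
    `v'' + [(n-3)/r + ((n-4)/r)v - h(r)]·v' = ((n-2)/r²)(v+2)(v+1)v`,
    with `-2 < v(r) < 0` on `(0,R)` and `v(R) = 0` or `v(R) = -2`. Then
    `∫₀^R [n-4 + (n-4)v - r·h(r)]·r·v'² dr + R²v'(R)²/2 = 0`.
    In particular, if `n = 4` and `h ≤ 0` on `(0,∞)`, no such `R` can exist. -/
theorem integral_identity_equv (n : ℕ) (hn : 2 ≤ n) (h : ℝ → ℝ)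
    (hhc : ContinuousOn h (Set.Ici 0))
    (R : ℝ) (hR : 0 < R) (v v' v'' : ℝ → ℝ)
    (hv : ∀ r ∈ Set.Icc (0 : ℝ) R, HasDerivWithinAt v (v' r) (Set.Icc 0 R) r)
    (hv' : ∀ r ∈ Set.Icc (0 : ℝ) R, HasDerivWithinAt v' (v'' r) (Set.Icc 0 R) r)
    (hv'' : ContinuousOn v'' (Set.Icc 0 R))
    (hv0 : v 0 = 0)
    (heq : ∀ r ∈ Set.Ioc (0 : ℝ) R,
      v'' r + (((n : ℝ) - 3) / r + ((n : ℝ) - 4) / r * v r - h r) * v' r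
        = ((n : ℝ) - 2) / r ^ 2 * ((v r + 2) * (v r + 1) * v r))
    (hbd : ∀ r ∈ Set.Ioo (0 : ℝ) R, -2 < v r ∧ v r < 0)
    (hend : v R = 0 ∨ v R = -2) :
    (∫ r in Set.Ioc (0 : ℝ) R,
        (((n : ℝ) - 4) + ((n : ℝ) - 4) * v r - r * h r) * r * v' r ^ 2)
      + R ^ 2 * v' R ^ 2 / 2 = 0 ∧
    (n = 4 → (∀ r : ℝ, 0 < r → h r ≤ 0) → False) := by
  have hR0 : (0:ℝ) ≤ R := hR.le
  set E : ℝ → ℝ := fun r => r^2 * v' r^2 / 2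
      - ((n:ℝ)-2) * ((v r + 2)^2 * (v r)^2 / 4) with hE
  set G : ℝ → ℝ := fun x =>
      -((((n:ℝ)-4) + ((n:ℝ)-4) * v x - x * h x) * x * v' x ^ 2) with hG
  have hvc : ContinuousOn v (Set.Icc 0 R) := fun r hr => (hv r hr).continuousWithinAt
  have hv'c : ContinuousOn v' (Set.Icc 0 R) := fun r hr => (hv' r hr).continuousWithinAt
  have hhc' : ContinuousOn h (Set.Icc 0 R) := hhc.mono (Set.Icc_subset_Ici_self)
  have hGc : ContinuousOn G (Set.Icc 0 R) := by
    apply ContinuousOn.neg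
    exact (((continuousOn_const.add (continuousOn_const.mul hvc)).sub
      (continuousOn_id.mul hhc')).mul continuousOn_id).mul (hv'c.pow 2)
  have hEc : ContinuousOn E (Set.Icc 0 R) := by
    apply ContinuousOn.sub
    · exact (((continuousOn_id.pow 2).mul (hv'c.pow 2)).div_const 2)
    · exact continuousOn_const.mul ((((hvc.add continuousOn_const).pow 2).mul (hvc.pow 2)).div_const 4)
  have hEd : ∀ r ∈ Set.Icc (0:ℝ) R, HasDerivWithinAt E
      (r * v' r^2 + r^2 * v' r * v'' r
        - ((n:ℝ)-2) * ((v r + 2) * (v r + 1) * v r) * v' r) (Set.Icc 0 R) r := by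
    intro r hr
    have h1 := hv r hr
    have h2 := hv' r hr
    have hx : HasDerivWithinAt (fun x : ℝ => x) 1 (Set.Icc 0 R) r :=
      (hasDerivAt_id r).hasDerivWithinAt
    have hd := (((hx.pow 2).mul (h2.pow 2)).div_const 2).sub
      ((((((h1.add_const 2).pow 2).mul (h1.pow 2)).div_const 4).const_mul ((n:ℝ)-2)))
    refine hd.congr_deriv ?_
    norm_num
    ring
  have hEG : ∀ r ∈ Set.Ioc (0:ℝ) R,
      r * v' r^2 + r^2 * v' r * v'' r
        - ((n:ℝ)-2) * ((v r + 2) * (v r + 1) * v r) * v' r = G r := by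
    intro r hr
    have hr0 : r ≠ 0 := ne_of_gt hr.1
    have key := heq r hr
    have hv2 : v'' r = ((n:ℝ) - 2) / r ^ 2 * ((v r + 2) * (v r + 1) * v r)
        - (((n : ℝ) - 3) / r + ((n : ℝ) - 4) / r * v r - h r) * v' r := by linarith
    rw [hv2, hG]
    field_simp
    ring
  have hEd' : ∀ r ∈ Set.Ioo (0:ℝ) R, HasDerivWithinAt E (G r) (Set.Ioi r) r := by
    intro r hr
    have h1 := hEd r (Set.Ioo_subset_Icc_self hr)
    rw [hEG r ⟨hr.1, hr.2.le⟩] at h1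
    exact (h1.hasDerivAt (Icc_mem_nhds hr.1 hr.2)).hasDerivWithinAt
  have hftc : ∀ a b : ℝ, 0 ≤ a → a ≤ b → b ≤ R →
      ∫ x in a..b, G x = E b - E a := by
    intro a b ha hab hbR
    have hsub : Set.Icc a b ⊆ Set.Icc 0 R :=
      Set.Icc_subset_Icc ha hbR
    apply intervalIntegral.integral_eq_sub_of_hasDeriv_right_of_le hab (hEc.mono hsub)
    · intro x hx
      exact hEd' x ⟨lt_of_le_of_lt ha hx.1, lt_of_lt_of_le hx.2 hbR⟩
    · exact ContinuousOn.intervalIntegrable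
        (by rw [Set.uIcc_of_le hab]; exact hGc.mono hsub)
  have hE0 : E 0 = 0 := by simp [hE, hv0]
  have hER : E R = R^2 * v' R ^ 2 / 2 := by
    rcases hend with he | he <;> simp [hE, he]
  have hIoc : ∫ x in Set.Ioc (0:ℝ) R, G x = E R := by
    have := hftc 0 R le_rfl hR0 le_rfl
    rwa [intervalIntegral.integral_of_le hR0, hE0, sub_zero] at this
  have hmain : (∫ r in Set.Ioc (0 : ℝ) R,
        (((n : ℝ) - 4) + ((n : ℝ) - 4) * v r - r * h r) * r * v' r ^ 2)
      + R ^ 2 * v' R ^ 2 / 2 = 0 := by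
    have hneg : ∀ r, (((n : ℝ) - 4) + ((n : ℝ) - 4) * v r - r * h r) * r * v' r ^ 2
        = - G r := by intro r; simp [hG]
    rw [show (fun r => (((n : ℝ) - 4) + ((n : ℝ) - 4) * v r - r * h r) * r * v' r ^ 2)
        = fun r => -G r from funext hneg, integral_neg, hIoc, hER]
    ring
  refine ⟨hmain, ?_⟩
  intro hn4 hh
  subst hn4
  have hGle : ∀ a b : ℝ, 0 ≤ a → b ≤ R → ∀ x ∈ Set.Icc a b, G x ≤ 0 := by
    intro a b ha hb x hx
    rcases eq_or_lt_of_le (ha.trans hx.1) with h0 | h0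
    · simp [hG, ← h0]
    · have hhx := hh x h0
      have hkey : (0:ℝ) ≤ x * (-h x) * x * v' x ^ 2 :=
        mul_nonneg (mul_nonneg (mul_nonneg h0.le (by linarith)) h0.le) (sq_nonneg _)
      have hGx : G x = -((((4:ℕ):ℝ) - 4 + (((4:ℕ):ℝ) - 4) * v x - x * h x) * x * v' x ^ 2) := by
        rw [hG]
      rw [hGx]
      push_cast
      nlinarith [hkey]
  have hint : ∀ a b : ℝ, 0 ≤ a → a ≤ b → b ≤ R → ∫ x in a..b, G x ≤ 0 := by
    intro a b ha hab hb
    have := intervalIntegral.integral_nonneg (μ := volume) (f := fun x => -G x) hab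
      (fun u hu => neg_nonneg.mpr (hGle a b ha hb u hu))
    rw [intervalIntegral.integral_neg] at this
    linarith
  have hER0 : E R = 0 := by
    have h1 : E R ≤ 0 := by
      have := hint 0 R le_rfl hR0 le_rfl
      rw [hftc 0 R le_rfl hR0 le_rfl, hE0, sub_zero] at this
      exact this
    have h2 : 0 ≤ E R := by rw [hER]; positivity
    linarith
  have hEr0 : ∀ r ∈ Set.Icc (0:ℝ) R, E r = 0 := by
    intro r hr
    have h1 : E r ≤ 0 := by
      have := hint 0 r le_rfl hr.1 hr.2
      rwa [hftc 0 r le_rfl hr.1 hr.2, hE0, sub_zero] at this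
    have h2 : 0 ≤ E r := by
      have := hint r R hr.1 hr.2 le_rfl
      rw [hftc r R hr.1 hr.2 le_rfl, hER0] at this
      linarith
    linarith
  -- pointwise identity on Ioo
  have hsq : ∀ r ∈ Set.Ioo (0:ℝ) R, (r * v' r)^2 = (v r * (v r + 2))^2 := by
    intro r hr
    have := hEr0 r (Set.Ioo_subset_Icc_self hr)
    simp only [hE] at this
    linear_combination (2:ℝ) * this
  have hbnd : ∀ r ∈ Set.Ioo (0:ℝ) R,
      v r * (v r + 2) ≤ r * v' r ∧ r * v' r ≤ -(v r * (v r + 2)) := by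
    intro r hr
    obtain ⟨hb1, hb2⟩ := hbd r hr
    have hprod : v r * (v r + 2) ≤ 0 := by nlinarith
    have hz : (r * v' r - v r * (v r + 2)) * (r * v' r + v r * (v r + 2)) = 0 := by
      linear_combination hsq r hr
    rcases mul_eq_zero.mp hz with hz | hz
    · constructor <;> nlinarith
    · constructor <;> nlinarith
  -- Grönwall-type contradiction
  set K : ℝ := 4 / R with hK
  have hKR : K * R = 4 := by rw [hK]; field_simp
  have hKpos : 0 < K := by positivity
  have hhalf : R / 2 ∈ Set.Ioo (0:ℝ) R := ⟨by linarith, by linarith⟩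
  obtain ⟨hbh1, hbh2⟩ := hbd (R/2) hhalf
  have hintIoo : Set.Ioo (R/2) R ⊆ Set.Ioo (0:ℝ) R :=
    Set.Ioo_subset_Ioo (by linarith) le_rfl
  have hIccsub : Set.Icc (R/2) R ⊆ Set.Icc (0:ℝ) R :=
    Set.Icc_subset_Icc (by linarith) le_rfl
  have hintr : interior (Set.Icc (R/2) R) = Set.Ioo (R/2) R := interior_Icc
  rcases hend with hendR | hendR
  · -- v R = 0 : use φ = (-v) e^{Kr}
    set φ : ℝ → ℝ := fun r => (-v r) * Real.exp (K * r) with hφ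
    have hmono : MonotoneOn φ (Set.Icc (R/2) R) := by
      apply monotoneOn_of_deriv_nonneg (convex_Icc _ _)
      · exact (hvc.mono hIccsub).neg.mul
          (Real.continuous_exp.comp (continuous_const.mul continuous_id)).continuousOn
      · intro x hx
        rw [hintr] at hx
        have hx' := hintIoo hx
        have hdv : HasDerivAt v (v' x) x :=
          (hv x (Set.Ioo_subset_Icc_self hx')).hasDerivAt (Icc_mem_nhds hx'.1 hx'.2)
        exact ((hdv.neg.mul (((hasDerivAt_id x).const_mul K).exp))).differentiableAt.differentiableWithinAt
      · intro x hx
        rw [hintr] at hx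
        have hx' := hintIoo hx
        have hdv : HasDerivAt v (v' x) x :=
          (hv x (Set.Ioo_subset_Icc_self hx')).hasDerivAt (Icc_mem_nhds hx'.1 hx'.2)
        have hdφ : HasDerivAt φ ((-v' x) * Real.exp (K * x)
            + (-v x) * (Real.exp (K * x) * (K * 1))) x :=
          (hdv.neg.mul (((hasDerivAt_id x).const_mul K).exp))
        rw [hdφ.deriv]
        obtain ⟨hb1, hb2⟩ := hbd x hx'
        have hub := (hbnd x hx').2
        have hexp : 0 < Real.exp (K * x) := Real.exp_pos _
        -- need: -v' x + K * (-v x) ≥ 0, from x * v' x ≤ -(v x * (v x + 2)) ≤ 2 * (-v x)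
        have hx1 : R / 2 < x := hx.1
        have hx2 : 0 < x := hx'.1
        have hxK : 2 ≤ x * K := by
          nlinarith [hKR, mul_nonneg hKpos.le (show (0:ℝ) ≤ x - R/2 by linarith)]
        have key : v' x ≤ K * (-v x) := by
          have h1 : x * v' x ≤ (-(v x)) * (v x + 2) := by nlinarith
          have h2 : (-(v x)) * (v x + 2) ≤ (-(v x)) * 2 := by nlinarith
          have h3 : x * v' x ≤ x * (K * (-v x)) := by
            nlinarith [mul_nonneg (show (0:ℝ) ≤ x * K - 2 by linarith)
              (show (0:ℝ) ≤ -v x by linarith)]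
          exact le_of_mul_le_mul_left h3 hx2
        nlinarith [mul_nonneg (show (0:ℝ) ≤ -v' x + K * (-v x) by linarith) hexp.le]
    have hle := hmono (Set.left_mem_Icc.mpr (by linarith)) (Set.right_mem_Icc.mpr (by linarith)) (by linarith)
    have : φ R = 0 := by simp [hφ, hendR]
    have : 0 < φ (R/2) := by
      simp only [hφ]
      have : 0 < -v (R/2) := by linarith
      positivity
    linarith
  · -- v R = -2 : use ψ = (v + 2) e^{Kr}
    set φ : ℝ → ℝ := fun r => (v r + 2) * Real.exp (K * r) with hφ
    have hmono : MonotoneOn φ (Set.Icc (R/2) R) := by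
      apply monotoneOn_of_deriv_nonneg (convex_Icc _ _)
      · exact ((hvc.mono hIccsub).add continuousOn_const).mul
          (Real.continuous_exp.comp (continuous_const.mul continuous_id)).continuousOn
      · intro x hx
        rw [hintr] at hx
        have hx' := hintIoo hx
        have hdv : HasDerivAt v (v' x) x :=
          (hv x (Set.Ioo_subset_Icc_self hx')).hasDerivAt (Icc_mem_nhds hx'.1 hx'.2)
        exact (((hdv.add_const 2).mul (((hasDerivAt_id x).const_mul K).exp))).differentiableAt.differentiableWithinAt
      · intro x hx
        rw [hintr] at hx
        have hx' := hintIoo hx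
        have hdv : HasDerivAt v (v' x) x :=
          (hv x (Set.Ioo_subset_Icc_self hx')).hasDerivAt (Icc_mem_nhds hx'.1 hx'.2)
        have hdφ : HasDerivAt φ ((v' x) * Real.exp (K * x)
            + (v x + 2) * (Real.exp (K * x) * (K * 1))) x :=
          ((hdv.add_const 2).mul (((hasDerivAt_id x).const_mul K).exp))
        rw [hdφ.deriv]
        obtain ⟨hb1, hb2⟩ := hbd x hx'
        have hlb := (hbnd x hx').1
        have hexp : 0 < Real.exp (K * x) := Real.exp_pos _
        have hx1 : R / 2 < x := hx.1
        have hx2 : 0 < x := hx'.1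
        have hxK : 2 ≤ x * K := by
          nlinarith [hKR, mul_nonneg hKpos.le (show (0:ℝ) ≤ x - R/2 by linarith)]
        have key : -(K * (v x + 2)) ≤ v' x := by
          have h1 : (-2 : ℝ) * (v x + 2) ≤ x * v' x := by nlinarith
          have h3 : x * (-(K * (v x + 2))) ≤ x * v' x := by
            nlinarith [mul_nonneg (show (0:ℝ) ≤ x * K - 2 by linarith)
              (show (0:ℝ) ≤ v x + 2 by linarith)]
          exact le_of_mul_le_mul_left h3 hx2
        nlinarith [mul_nonneg (show (0:ℝ) ≤ v' x + K * (v x + 2) by linarith) hexp.le]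
    have hle := hmono (Set.left_mem_Icc.mpr (by linarith)) (Set.right_mem_Icc.mpr (by linarith)) (by linarith)
    have : φ R = 0 := by simp [hφ, hendR]
    have : 0 < φ (R/2) := by
      simp only [hφ]
      have : 0 < v (R/2) + 2 := by linarith
      positivity
    linarith
end
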